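/- The ratio a_n/A_n of the number of connected labeled DAGs on n vertices to the number of labeled DAGs on n vertices tends to 1 as n tends to infinity. -/

import Mathlib

open Filter Finset

/-- A directed graph (given by its edge relation) is acyclic iff no vertex lies on a
directed cycle, i.e. the transitive closure is irreflexive. -/
def DigraphAcyclic {V : Type*} (g : V → V → Prop) : Prop :=
  ∀ a, ¬ Relation.TransGen g a a

/-- The number of labeled DAGs on `n` vertices. -/
noncomputable def dagCount (n : ℕ) : ℕ :=
  Nat.card {g : Fin n → Fin n → Bool // DigraphAcyclic fun x y => g x y = true}

/-- The number of connected labeled DAGs on `n` vertices (connected means the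
underlying undirected graph is connected). -/
noncomputable def connDagCount (n : ℕ) : ℕ :=
  Nat.card {g : Fin n → Fin n → Bool //
    (DigraphAcyclic fun x y => g x y = true) ∧
    ∀ a b : Fin n, Relation.ReflTransGen (fun x y => g x y = true ∨ g y x = true) a b}

abbrev Acy {V : Type*} (g : V → V → Bool) : Prop :=
  DigraphAcyclic fun x y => g x y = true

lemma acy_comp {V W : Type*} (e : W ≃ V) {g : V → V → Bool} (hg : Acy g) :
    Acy (fun x y => g (e x) (e y)) := by
  intro a ha
  exact hg (e a) (ha.lift e (fun x y h => h))

lemma acy_comp_iff {V W : Type*} (e : W ≃ V) {g : V → V → Bool} :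
    Acy (fun x y => g (e x) (e y)) ↔ Acy g := by
  constructor
  · intro h
    have := acy_comp e.symm h
    simpa using this
  · exact acy_comp e

lemma card_dag_equiv {V : Type*} {n : ℕ} (e : V ≃ Fin n) :
    Nat.card {g : V → V → Bool // Acy g} = dagCount n := by
  refine Nat.card_congr (Equiv.subtypeEquiv
    (Equiv.arrowCongr e (Equiv.arrowCongr e (Equiv.refl Bool))) ?_)
  intro g
  rw [show (Equiv.arrowCongr e (Equiv.arrowCongr e (Equiv.refl Bool))) g
      = fun x y => g (e.symm x) (e.symm y) from rfl]
  exact (acy_comp_iff e.symm).symm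

lemma acy_false {V : Type*} : Acy (fun (_ _ : V) => false) := by
  intro a ha
  obtain ⟨b, h, -⟩ := Relation.TransGen.head'_iff.mp ha
  simp at h

lemma dagCount_pos (n : ℕ) : 0 < dagCount n := by
  have : Nonempty {g : Fin n → Fin n → Bool // Acy g} := ⟨⟨_, acy_false⟩⟩
  exact Nat.card_pos

lemma connDagCount_le (n : ℕ) : connDagCount n ≤ dagCount n := by
  apply Nat.card_le_card_of_injective (fun g => (⟨g.1, g.2.1⟩ : {g : Fin n → Fin n → Bool // Acy g}))
  intro a b h
  simp only [Subtype.mk.injEq] at h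
  exact Subtype.ext h

section SumGraph
variable {α β : Type*}

def sumGraph (g1 : α → α → Bool) (g2 : β → β → Bool) (h : α → β → Bool) :
    (α ⊕ β) → (α ⊕ β) → Bool
  | .inl x, .inl y => g1 x y
  | .inr x, .inr y => g2 x y
  | .inl x, .inr y => h x y
  | .inr _, .inl _ => false

def sumProp (g1 : α → α → Bool) (g2 : β → β → Bool) : (α ⊕ β) → (α ⊕ β) → Prop
  | .inl x, .inl y => Relation.TransGen (fun a b => g1 a b = true) x y
  | .inr x, .inr y => Relation.TransGen (fun a b => g2 a b = true) x y
  | .inl _, .inr _ => True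
  | .inr _, .inl _ => False

lemma sumGraph_transGen {g1 : α → α → Bool} {g2 : β → β → Bool} {h : α → β → Bool}
    {a b : α ⊕ β} (hab : Relation.TransGen (fun x y => sumGraph g1 g2 h x y = true) a b) :
    sumProp g1 g2 a b := by
  induction hab with
  | single h' =>
    rename_i b'
    cases a <;> cases b'
    · exact Relation.TransGen.single h'
    · trivial
    · simp [sumGraph] at h'
    · exact Relation.TransGen.single h'
  | tail hab h' ih =>
    rename_i b' c'
    cases a <;> cases b' <;> cases c'
    · exact Relation.TransGen.tail ih h'
    · trivial
    · simp [sumGraph] at h'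
    · trivial
    · exact ih.elim
    · exact ih.elim
    · simp [sumGraph] at h'
    · exact Relation.TransGen.tail ih h'

lemma sumGraph_acy {g1 : α → α → Bool} {g2 : β → β → Bool} {h : α → β → Bool}
    (h1 : Acy g1) (h2 : Acy g2) : Acy (sumGraph g1 g2 h) := by
  intro a ha
  have := sumGraph_transGen ha
  match a with
  | .inl x => exact h1 x this
  | .inr x => exact h2 x this

lemma dagCount_mul_le (k m : ℕ) :
    dagCount k * dagCount m * 2 ^ (k * m) ≤ dagCount (k + m) := by
  have e : (Fin k ⊕ Fin m) ≃ Fin (k + m) := finSumFinEquiv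
  rw [← card_dag_equiv e]
  have h2 : (2 : ℕ) ^ (k * m) = Nat.card (Fin k → Fin m → Bool) := by
    simp [Nat.card_eq_fintype_card, ← pow_mul, mul_comm]
  rw [show dagCount k = Nat.card {g : Fin k → Fin k → Bool // Acy g} from rfl,
    show dagCount m = Nat.card {g : Fin m → Fin m → Bool // Acy g} from rfl, h2,
    ← Nat.card_prod, ← Nat.card_prod]
  apply Nat.card_le_card_of_injective
    (f := fun p => (⟨sumGraph p.1.1.1 p.1.2.1 p.2, sumGraph_acy p.1.1.2 p.1.2.2⟩ :
      {g : (Fin k ⊕ Fin m) → (Fin k ⊕ Fin m) → Bool // Acy g}))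
  rintro ⟨⟨⟨a1, _⟩, ⟨a2, _⟩⟩, a3⟩ ⟨⟨⟨b1, _⟩, ⟨b2, _⟩⟩, b3⟩ hab
  simp only [Subtype.mk.injEq] at hab
  have e1 : a1 = b1 := by
    funext x y; exact congrFun (congrFun hab (.inl x)) (.inl y)
  have e2 : a2 = b2 := by
    funext x y; exact congrFun (congrFun hab (.inr x)) (.inr y)
  have e3 : a3 = b3 := by
    funext x y; exact congrFun (congrFun hab (.inl x)) (.inr y)
  subst e1; subst e2; subst e3; rfl
end SumGraph

section Disc
variable {n : ℕ}

def Conn (g : Fin n → Fin n → Bool) : Prop :=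
  ∀ a b : Fin n, Relation.ReflTransGen (fun x y => g x y = true ∨ g y x = true) a b

open Classical in
noncomputable def comp0 [NeZero n] (g : Fin n → Fin n → Bool) : Finset (Fin n) :=
  Finset.univ.filter
    (fun x => Relation.ReflTransGen (fun a b => g a b = true ∨ g b a = true) 0 x)

lemma mem_comp0 [NeZero n] {g : Fin n → Fin n → Bool} {x : Fin n} :
    x ∈ comp0 g ↔ Relation.ReflTransGen (fun a b => g a b = true ∨ g b a = true) 0 x := by
  simp [comp0]

lemma zero_mem_comp0 [NeZero n] {g : Fin n → Fin n → Bool} : 0 ∈ comp0 g :=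
  mem_comp0.mpr Relation.ReflTransGen.refl

lemma comp0_cross [NeZero n] {g : Fin n → Fin n → Bool} {x y : Fin n}
    (hx : x ∈ comp0 g) (hy : y ∉ comp0 g) : g x y = false ∧ g y x = false := by
  rw [mem_comp0] at hx
  constructor
  · by_contra h
    simp only [Bool.not_eq_false] at h
    exact hy (mem_comp0.mpr (hx.tail (Or.inl h)))
  · by_contra h
    simp only [Bool.not_eq_false] at h
    exact hy (mem_comp0.mpr (hx.tail (Or.inr h)))

lemma comp0_ne_univ [NeZero n] {g : Fin n → Fin n → Bool} (hg : ¬ Conn g) :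
    comp0 g ≠ Finset.univ := by
  intro hS
  apply hg
  have hsymm : Symmetric (fun a b : Fin n => g a b = true ∨ g b a = true) :=
    fun a b h => h.symm
  have hsymm' : Symmetric (Relation.ReflTransGen (fun a b : Fin n => g a b = true ∨ g b a = true)) :=
    fun a b h => by
      induction h with
      | refl => exact Relation.ReflTransGen.refl
      | tail _ hbc ih => exact Relation.ReflTransGen.head (hsymm hbc) ih
  intro a b
  have ha : a ∈ comp0 g := hS ▸ Finset.mem_univ a
  have hb : b ∈ comp0 g := hS ▸ Finset.mem_univ b
  exact (hsymm' (mem_comp0.mp ha)).trans (mem_comp0.mp hb)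

noncomputable def restr (g : Fin n → Fin n → Bool) (S : Finset (Fin n)) :
    ↥S → ↥S → Bool := fun x y => g x y

lemma restr_acy {g : Fin n → Fin n → Bool} (hg : Acy g) (S : Finset (Fin n)) :
    Acy (restr g S) := by
  intro a ha
  exact hg a (ha.lift Subtype.val (fun x y h => h))

lemma count_split (n : ℕ) :
    dagCount n = connDagCount n + Nat.card {g : Fin n → Fin n → Bool // Acy g ∧ ¬ Conn g} := by
  classical
  have key := Finset.card_filter_add_card_filter_not
    (s := Finset.univ.filter (fun g : Fin n → Fin n → Bool => Acy g)) (p := Conn)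
  rw [Finset.filter_filter, Finset.filter_filter] at key
  have h1 : dagCount n = (Finset.univ.filter (fun g : Fin n → Fin n → Bool => Acy g)).card := by
    rw [dagCount, Nat.card_eq_fintype_card, Fintype.card_subtype]
  have h2 : connDagCount n
      = (Finset.univ.filter (fun g : Fin n → Fin n → Bool => Acy g ∧ Conn g)).card := by
    rw [connDagCount, Nat.card_eq_fintype_card, Fintype.card_subtype]
    congr 1
    apply Finset.filter_congr
    intro g _
    exact Iff.rfl
  have h3 : Nat.card {g : Fin n → Fin n → Bool // Acy g ∧ ¬ Conn g}
      = (Finset.univ.filter (fun g : Fin n → Fin n → Bool => Acy g ∧ ¬ Conn g)).card := by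
    rw [Nat.card_eq_fintype_card, Fintype.card_subtype]
  rw [h1, h2, h3, ← key]

lemma fiber_bound [NeZero n] (S : Finset (Fin n)) :
    Nat.card {g : Fin n → Fin n → Bool // (Acy g ∧ ¬ Conn g) ∧ comp0 g = S}
      ≤ dagCount S.card * dagCount (n - S.card) := by
  classical
  have eS : ↥S ≃ Fin S.card := S.equivFin
  have eSc : ↥(Sᶜ : Finset (Fin n)) ≃ Fin (n - S.card) := by
    have : (Sᶜ : Finset (Fin n)).card = n - S.card := by
      rw [Finset.card_compl]; simp
    exact this ▸ (Sᶜ : Finset (Fin n)).equivFin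
  rw [← card_dag_equiv eS, ← card_dag_equiv eSc, ← Nat.card_prod]
  apply Nat.card_le_card_of_injective
    (f := fun g => (⟨restr g.1 S, restr_acy g.2.1.1 S⟩,
                    ⟨restr g.1 Sᶜ, restr_acy g.2.1.1 Sᶜ⟩))
  rintro ⟨g, ⟨hg, hgc⟩, hgS⟩ ⟨g', ⟨hg', hgc'⟩, hgS'⟩ hab
  simp only [Prod.mk.injEq, Subtype.mk.injEq] at hab
  obtain ⟨h1, h2⟩ := hab
  refine Subtype.ext ?_
  show g = g'
  funext x y
  by_cases hx : x ∈ S <;> by_cases hy : y ∈ S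
  · exact congrFun (congrFun h1 ⟨x, hx⟩) ⟨y, hy⟩
  · have c1 := comp0_cross (hgS ▸ hx : x ∈ comp0 g) (fun h => hy (hgS ▸ h))
    have c2 := comp0_cross (hgS' ▸ hx : x ∈ comp0 g') (fun h => hy (hgS' ▸ h))
    rw [c1.1, c2.1]
  · have c1 := comp0_cross (hgS ▸ hy : y ∈ comp0 g) (fun h => hx (hgS ▸ h))
    have c2 := comp0_cross (hgS' ▸ hy : y ∈ comp0 g') (fun h => hx (hgS' ▸ h))
    rw [c1.2, c2.2]
  · exact congrFun (congrFun h2 ⟨x, Finset.mem_compl.mpr hx⟩) ⟨y, Finset.mem_compl.mpr hy⟩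

noncomputable def discSets (n : ℕ) [NeZero n] : Finset (Finset (Fin n)) := by
  classical
  exact Finset.univ.filter (fun S => (0 : Fin n) ∈ S ∧ S ≠ Finset.univ)

lemma disc_bound (n : ℕ) [NeZero n] :
    dagCount n ≤ connDagCount n
      + ∑ S ∈ discSets n, dagCount S.card * dagCount (n - S.card) := by
  classical
  rw [count_split n]
  refine Nat.add_le_add_left ?_ _
  have hcard : Nat.card {g : Fin n → Fin n → Bool // Acy g ∧ ¬ Conn g}
      = (Finset.univ.filter (fun g : Fin n → Fin n → Bool => Acy g ∧ ¬ Conn g)).card := by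
    rw [Nat.card_eq_fintype_card, Fintype.card_subtype]
  rw [hcard]
  rw [Finset.card_eq_sum_card_fiberwise
    (f := comp0) (t := discSets n)
    (fun g hg => by
      simp only [Finset.mem_coe, Finset.mem_filter, Finset.mem_univ, true_and] at hg
      simp only [Finset.mem_coe, discSets, Finset.mem_filter, Finset.mem_univ, true_and]
      exact ⟨zero_mem_comp0, comp0_ne_univ hg.2⟩)]
  refine Finset.sum_le_sum (fun S _ => ?_)
  calc ((Finset.univ.filter (fun g : Fin n → Fin n → Bool => Acy g ∧ ¬ Conn g)).filter
          (fun g => comp0 g = S)).card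
      = Nat.card {g : Fin n → Fin n → Bool // (Acy g ∧ ¬ Conn g) ∧ comp0 g = S} := by
        rw [Nat.card_eq_fintype_card, Fintype.card_subtype, Finset.filter_filter]
    _ ≤ _ := fiber_bound S
end Disc

lemma mem_discSets {n : ℕ} [NeZero n] {S : Finset (Fin n)} :
    S ∈ discSets n ↔ (0 : Fin n) ∈ S ∧ S ≠ Finset.univ := by
  simp [discSets]

lemma choose_le_pow_aux (n : ℕ) : ∀ k, n.choose k ≤ n ^ k := by
  intro k
  induction k with
  | zero => simp
  | succ k ih =>
    calc n.choose (k+1) ≤ n.choose (k+1) * (k+1) := Nat.le_mul_of_pos_right _ (Nat.succ_pos k)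
      _ = n.choose k * (n - k) := Nat.choose_succ_right_eq n k
      _ ≤ n ^ k * n := Nat.mul_le_mul ih (Nat.sub_le n k)
      _ = n ^ (k+1) := (pow_succ n k).symm

lemma choose_le_pow_min {n k : ℕ} (hk : k ≤ n) : n.choose k ≤ n ^ min k (n - k) := by
  rcases min_cases k (n - k) with ⟨h1, _⟩ | ⟨h1, _⟩
  · rw [h1]; exact choose_le_pow_aux n k
  · rw [h1, ← Nat.choose_symm hk]; exact choose_le_pow_aux n (n - k)

lemma two_le_pow_half {n : ℕ} (hn : 8 ≤ n) : n ≤ 2 ^ (n / 2) := by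
  have aux : ∀ j, 4 ≤ j → 2 * j + 1 ≤ 2 ^ j := by
    intro j hj
    induction j, hj using Nat.le_induction with
    | base => norm_num
    | succ j hj ih =>
      have : 2 * (j + 1) + 1 ≤ 2 * (2 * j + 1) := by omega
      calc 2 * (j+1) + 1 ≤ 2 * (2*j+1) := this
        _ ≤ 2 * 2 ^ j := by omega
        _ = 2 ^ (j+1) := (pow_succ' 2 j).symm
  have h4 : 4 ≤ n / 2 := by omega
  have := aux (n / 2) h4
  omega

lemma min_mul_half_le {n k : ℕ} (h1 : 1 ≤ k) (h2 : k < n) :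
    min k (n - k) * (n / 2) ≤ k * (n - k) := by
  rcases min_cases k (n - k) with ⟨hm, hle⟩ | ⟨hm, hle⟩ <;> rw [hm]
  · exact Nat.mul_le_mul_left k (by omega)
  · rw [mul_comm k (n - k)]
    exact Nat.mul_le_mul_left (n - k) (by omega)

lemma sum_est (n : ℕ) [NeZero n] (hn : 8 ≤ n) :
    ∑ S ∈ discSets n, ((2 : ℝ) ^ (S.card * (n - S.card)))⁻¹ ≤ (n : ℝ) ^ 2 / 2 ^ (n / 2) := by
  classical
  rw [Finset.sum_comp (fun k => ((2 : ℝ) ^ (k * (n - k)))⁻¹) Finset.card]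
  have hq0 : (0 : ℝ) < 2 ^ (n / 2) := by positivity
  have hq1 : (n : ℝ) / 2 ^ (n / 2) ≤ 1 := by
    rw [div_le_one hq0]
    exact_mod_cast two_le_pow_half hn
  have hterm : ∀ b ∈ (discSets n).image Finset.card,
      #{S ∈ discSets n | S.card = b} • ((2 : ℝ) ^ (b * (n - b)))⁻¹
        ≤ (n : ℝ) / 2 ^ (n / 2) := by
    intro b hb
    obtain ⟨S, hS, rfl⟩ := Finset.mem_image.mp hb
    obtain ⟨h0S, hSne⟩ := mem_discSets.mp hS
    have hb1 : 1 ≤ S.card := Finset.card_pos.mpr ⟨0, h0S⟩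
    have hbn : S.card < n := by
      have := Finset.card_le_univ S
      rcases lt_or_eq_of_le this with h | h
      · simpa using h
      · exact absurd ((Finset.card_eq_iff_eq_univ _).mp (by simpa using h)) hSne
    set b := S.card
    set m := min b (n - b) with hm
    have hm1 : 1 ≤ m := by simp only [hm]; omega
    have hcount : #{T ∈ discSets n | T.card = b} ≤ n.choose b := by
      calc #{T ∈ discSets n | T.card = b} ≤ #(Finset.powersetCard b (Finset.univ : Finset (Fin n)))
          := Finset.card_le_card (by
            intro T hT
            simp only [Finset.mem_filter] at hT
            exact Finset.mem_powersetCard.mpr ⟨Finset.subset_univ T, hT.2⟩)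
        _ = (Fintype.card (Fin n)).choose b := by rw [Finset.card_powersetCard, Finset.card_univ]
        _ = n.choose b := by rw [Fintype.card_fin]
    have hpow : ((2 : ℝ) ^ (b * (n - b)))⁻¹ ≤ (((2 : ℝ) ^ (n / 2)) ^ m)⁻¹ := by
      rw [← pow_mul]
      apply inv_anti₀ (by positivity)
      apply pow_le_pow_right₀ (by norm_num)
      rw [mul_comm (n/2) m]
      exact min_mul_half_le hb1 hbn
    calc #{T ∈ discSets n | T.card = b} • ((2 : ℝ) ^ (b * (n - b)))⁻¹
        = (#{T ∈ discSets n | T.card = b} : ℝ) * ((2 : ℝ) ^ (b * (n - b)))⁻¹ :=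
          nsmul_eq_mul _ _
      _ ≤ (n : ℝ) ^ m * (((2 : ℝ) ^ (n / 2)) ^ m)⁻¹ := by
          apply mul_le_mul _ hpow (by positivity) (by positivity)
          calc (#{T ∈ discSets n | T.card = b} : ℝ) ≤ (n.choose b : ℝ) := by exact_mod_cast hcount
            _ ≤ ((n : ℕ) ^ m : ℕ) := by exact_mod_cast choose_le_pow_min hbn.le
            _ = (n : ℝ) ^ m := by push_cast; ring
      _ = ((n : ℝ) / 2 ^ (n / 2)) ^ m := by rw [div_pow]; rw [div_eq_mul_inv]
      _ ≤ ((n : ℝ) / 2 ^ (n / 2)) ^ 1 := by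
          apply pow_le_pow_of_le_one (by positivity) hq1 hm1
      _ = (n : ℝ) / 2 ^ (n / 2) := pow_one _
  calc ∑ b ∈ (discSets n).image Finset.card,
        #{S ∈ discSets n | S.card = b} • ((2 : ℝ) ^ (b * (n - b)))⁻¹
      ≤ ∑ _b ∈ (discSets n).image Finset.card, (n : ℝ) / 2 ^ (n / 2) :=
        Finset.sum_le_sum hterm
    _ = (#((discSets n).image Finset.card) : ℝ) * ((n : ℝ) / 2 ^ (n / 2)) := by
        rw [Finset.sum_const, nsmul_eq_mul]
    _ ≤ (n : ℝ) * ((n : ℝ) / 2 ^ (n / 2)) := by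
        apply mul_le_mul_of_nonneg_right _ (by positivity)
        have : (discSets n).image Finset.card ⊆ Finset.range n := by
          intro b hb
          obtain ⟨S, hS, rfl⟩ := Finset.mem_image.mp hb
          obtain ⟨_, hSne⟩ := mem_discSets.mp hS
          rw [Finset.mem_range]
          rcases lt_or_eq_of_le (Finset.card_le_univ S) with h | h
          · simpa using h
          · exact absurd ((Finset.card_eq_iff_eq_univ _).mp (by simpa using h)) hSne
        calc (#((discSets n).image Finset.card) : ℝ) ≤ (#(Finset.range n) : ℝ) := by
              exact_mod_cast Finset.card_le_card this
          _ = n := by rw [Finset.card_range]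
    _ = (n : ℝ) ^ 2 / 2 ^ (n / 2) := by ring

lemma main_est (n : ℕ) (hn : 8 ≤ n) :
    1 - (n : ℝ) ^ 2 / 2 ^ (n / 2) ≤ (connDagCount n : ℝ) / dagCount n := by
  haveI : NeZero n := ⟨by omega⟩
  have hA : (0 : ℝ) < dagCount n := by exact_mod_cast dagCount_pos n
  have hterm : ∀ S ∈ discSets n,
      ((dagCount S.card * dagCount (n - S.card) : ℕ) : ℝ)
        ≤ (dagCount n : ℝ) * ((2 : ℝ) ^ (S.card * (n - S.card)))⁻¹ := by
    intro S hS
    have hcard : S.card ≤ n := by simpa using Finset.card_le_univ S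
    have key := dagCount_mul_le S.card (n - S.card)
    rw [Nat.add_sub_cancel' hcard] at key
    have key' : ((dagCount S.card * dagCount (n - S.card) : ℕ) : ℝ)
        * 2 ^ (S.card * (n - S.card)) ≤ (dagCount n : ℝ) := by exact_mod_cast key
    rw [← le_div_iff₀ (by positivity), div_eq_mul_inv] at key'
    exact key'
  have hmain : (dagCount n : ℝ)
      ≤ connDagCount n + (dagCount n : ℝ) * ((n : ℝ) ^ 2 / 2 ^ (n / 2)) := by
    have h0 : (dagCount n : ℝ) ≤ connDagCount n
        + ∑ S ∈ discSets n, ((dagCount S.card * dagCount (n - S.card) : ℕ) : ℝ) := by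
      exact_mod_cast disc_bound n
    refine h0.trans (add_le_add_right ?_ _)
    calc ∑ S ∈ discSets n, ((dagCount S.card * dagCount (n - S.card) : ℕ) : ℝ)
        ≤ ∑ S ∈ discSets n, (dagCount n : ℝ) * ((2 : ℝ) ^ (S.card * (n - S.card)))⁻¹ :=
          Finset.sum_le_sum hterm
      _ = (dagCount n : ℝ) * ∑ S ∈ discSets n, ((2 : ℝ) ^ (S.card * (n - S.card)))⁻¹ :=
          (Finset.mul_sum _ _ _).symm
      _ ≤ (dagCount n : ℝ) * ((n : ℝ) ^ 2 / 2 ^ (n / 2)) :=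
          mul_le_mul_of_nonneg_left (sum_est n hn) (by positivity)
  rw [sub_le_iff_le_add]
  have h2 := (div_le_div_iff_of_pos_right hA).mpr hmain
  rw [div_self hA.ne'] at h2
  refine h2.trans (le_of_eq ?_)
  field_simp

lemma tendsto_aux : Tendsto (fun n : ℕ => (n : ℝ) ^ 2 / 2 ^ (n / 2)) atTop (nhds 0) := by
  have h2 : (1 : ℝ) < Real.sqrt 2 := by
    rw [show (1 : ℝ) = Real.sqrt 1 from Real.sqrt_one.symm]
    exact Real.sqrt_lt_sqrt (by norm_num) (by norm_num)
  have hT := (tendsto_pow_const_div_const_pow_of_one_lt 2 h2).const_mul (Real.sqrt 2)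
  rw [mul_zero] at hT
  apply squeeze_zero (fun n => by positivity) _ hT
  intro n
  have hs2 : Real.sqrt 2 ^ 2 = 2 := Real.sq_sqrt (by norm_num)
  have h1 : (Real.sqrt 2) ^ n ≤ Real.sqrt 2 * 2 ^ (n / 2) := by
    calc (Real.sqrt 2) ^ n ≤ (Real.sqrt 2) ^ (2 * (n / 2) + 1) := by
          apply pow_le_pow_right₀ h2.le (by omega)
      _ = Real.sqrt 2 * ((Real.sqrt 2) ^ 2) ^ (n / 2) := by
          rw [← pow_mul, pow_succ, mul_comm]
      _ = Real.sqrt 2 * 2 ^ (n / 2) := by rw [hs2]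
  have step : (1 : ℝ) / 2 ^ (n / 2) ≤ Real.sqrt 2 / (Real.sqrt 2) ^ n := by
    rw [div_le_div_iff₀ (by positivity) (by positivity)]
    simpa using h1
  calc (n : ℝ) ^ 2 / 2 ^ (n / 2) = (n : ℝ) ^ 2 * (1 / 2 ^ (n / 2)) := by ring
    _ ≤ (n : ℝ) ^ 2 * (Real.sqrt 2 / (Real.sqrt 2) ^ n) :=
        mul_le_mul_of_nonneg_left step (by positivity)
    _ = Real.sqrt 2 * ((n : ℝ) ^ 2 / (Real.sqrt 2) ^ n) := by ring

theorem connDagCount_div_dagCount_tendsto_one :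
    Tendsto (fun n : ℕ => (connDagCount n : ℝ) / dagCount n) atTop (nhds 1) := by
  have h1 : Tendsto (fun n : ℕ => 1 - (n : ℝ) ^ 2 / 2 ^ (n / 2)) atTop (nhds 1) := by
    simpa using tendsto_const_nhds.sub tendsto_aux
  apply tendsto_of_tendsto_of_tendsto_of_le_of_le' h1 tendsto_const_nhds
  · exact eventually_atTop.mpr ⟨8, fun n hn => main_est n hn⟩
  · refine Eventually.of_forall (fun n => ?_)
    apply div_le_one_of_le₀
    · exact_mod_cast connDagCount_le n
    · positivity
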